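/- arXiv:1309.0906 — 6 statements merged into one kernel-verified Lean document; each statement's English description precedes it below -/
import Mathlib

section
/- Let r ≥ 3 be a prime and let x(m) = ln(I(m²))/ln(I(m)) with I(m) = σ(m)/m. If s and t are positive integers with s < t, then x(r^s) > x(r^t). -/
open Finset

private def S5 (r k : ℕ) : ℕ := ∑ i ∈ Finset.range (k + 1), r ^ i

private lemma S5_zero (r : ℕ) : S5 r 0 = 1 := by simp [S5]

private lemma S5_succ (r k : ℕ) : S5 r (k + 1) = r * S5 r k + 1 := by
  simp [S5, geom_sum_succ]

private lemma sigma5 {r : ℕ} (hr : r.Prime) (k : ℕ) :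
    ArithmeticFunction.sigma 1 (r ^ k) = S5 r k := by
  rw [ArithmeticFunction.sigma_one_apply, Nat.sum_divisors_prime_pow hr]
  simp [S5]

private lemma S5_ge (r k : ℕ) (hr : 1 ≤ r) : r ^ k ≤ S5 r k := by
  induction k with
  | zero => simp [S5_zero]
  | succ n ih =>
    rw [S5_succ, pow_succ, mul_comm (r ^ n) r]
    nlinarith

private lemma S5_gt (r k : ℕ) (hr : 1 ≤ r) (hk : 1 ≤ k) : r ^ k < S5 r k := by
  obtain ⟨n, rfl⟩ : ∃ n, k = n + 1 := ⟨k - 1, by omega⟩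
  rw [S5_succ, pow_succ, mul_comm (r ^ n) r]
  have := S5_ge r n hr
  nlinarith [pow_pos (by omega : 0 < r) n]

private lemma S5_mono (r : ℕ) (hr : 3 ≤ r) : Monotone (S5 r) := by
  apply monotone_nat_of_le_succ
  intro k
  have h1 : 1 ≤ S5 r k := le_trans (Nat.one_le_pow _ _ (by omega)) (S5_ge r k (by omega))
  rw [S5_succ]; nlinarith

private lemma S5_step (r : ℕ) (hr : 3 ≤ r) (k : ℕ) : 3 * S5 r k ≤ S5 r (k+1) := by
  rw [S5_succ]
  have h1 : 1 ≤ S5 r k := le_trans (Nat.one_le_pow _ _ (by omega)) (S5_ge r k (by omega))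
  nlinarith

theorem stmt_5 (r s t : ℕ) (hr : r.Prime) (hr3 : 3 ≤ r)
    (hs : 0 < s) (hst : s < t)
    (x : ℕ → ℝ)
    (hx : ∀ m : ℕ, x m =
      Real.log ((ArithmeticFunction.sigma 1 (m ^ 2) : ℝ) / (m ^ 2 : ℕ)) /
        Real.log ((ArithmeticFunction.sigma 1 m : ℝ) / m)) :
    x (r ^ t) < x (r ^ s) := by
  have hr1 : (1:ℕ) ≤ r := by omega
  -- real quantities
  set e : ℕ → ℝ := fun k => 1 / ((r : ℝ) * (S5 r k : ℝ)) with he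
  set f : ℕ → ℝ := fun k => Real.log ((S5 r k : ℝ) / (r : ℝ) ^ k) with hf
  have hrR : (3:ℝ) ≤ (r:ℝ) := by exact_mod_cast hr3
  have hSpos : ∀ k, (0:ℝ) < (S5 r k : ℝ) := by
    intro k
    have h : (1:ℕ) ≤ S5 r k := le_trans (Nat.one_le_pow _ _ (by omega)) (S5_ge r k hr1)
    exact_mod_cast lt_of_lt_of_le Nat.zero_lt_one h
  have hSge : ∀ k, ((r:ℝ)) ^ k ≤ (S5 r k : ℝ) := by
    intro k; exact_mod_cast S5_ge r k hr1
  have he_pos : ∀ k, 0 < e k := by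
    intro k; simp only [he]
    have := hSpos k
    positivity
  -- e antitone and decay
  have he_mono : ∀ {j k : ℕ}, j ≤ k → e k ≤ e j := by
    intro j k h
    simp only [he]
    have hj := hSpos j
    have hmm : (S5 r j : ℝ) ≤ (S5 r k : ℝ) := by exact_mod_cast S5_mono r hr3 h
    apply one_div_le_one_div_of_le (by nlinarith)
    nlinarith
  have he_step : ∀ k, e (k+1) ≤ e k / 3 := by
    intro k
    simp only [he]
    have h3 : (3:ℝ) * (S5 r k : ℝ) ≤ (S5 r (k+1) : ℝ) := by exact_mod_cast S5_step r hr3 k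
    have hk0 := hSpos k; have hk1 := hSpos (k+1)
    rw [div_div]
    apply one_div_le_one_div_of_le (by nlinarith) (by nlinarith)
  have he1 : e 1 ≤ 1 / 12 := by
    simp only [he]
    have hS1 : (S5 r 1 : ℝ) = (r:ℝ) + 1 := by
      have : S5 r 1 = r + 1 := by simp [S5_succ, S5_zero]
      rw [this]; push_cast; ring
    rw [hS1, div_le_div_iff₀ (by nlinarith) (by norm_num)]
    nlinarith
  -- f recurrence
  have hfrec : ∀ k, f (k+1) = f k + Real.log (1 + e k) := by
    intro k
    simp only [hf]
    rw [← Real.log_mul (ne_of_gt (div_pos (hSpos k) (by positivity))) (ne_of_gt (by nlinarith [he_pos k]))]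
    congr 1
    have hSs : (S5 r (k+1) : ℝ) = (r:ℝ) * (S5 r k : ℝ) + 1 := by
      rw [S5_succ]; push_cast; ring
    have h1 : (r:ℝ) ≠ 0 := by positivity
    have h2 : (S5 r k : ℝ) ≠ 0 := ne_of_gt (hSpos k)
    have h3 : ((r:ℝ)) ^ k ≠ 0 := by positivity
    simp only [he]
    rw [hSs]
    field_simp
    ring
  have hd_pos : ∀ k, 0 < Real.log (1 + e k) := by
    intro k
    apply Real.log_pos
    nlinarith [he_pos k]
  have hfmono : StrictMono f := by
    apply strictMono_nat_of_lt_succ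
    intro k
    rw [hfrec k]
    nlinarith [hd_pos k]
  have hfpos : ∀ k, 1 ≤ k → 0 < f k := by
    intro k hk
    simp only [hf]
    apply Real.log_pos
    rw [lt_div_iff₀ (by positivity)]
    have : ((r:ℝ)) ^ k < (S5 r k : ℝ) := by exact_mod_cast S5_gt r k hr1 hk
    linarith
  -- key log inequality
  have hkey : ∀ k, 1 ≤ k →
      Real.log (1 + e (2*k)) + Real.log (1 + e (2*k+1)) < Real.log (1 + e k) := by
    intro k hk
    have h1 : e (2*k) ≤ e k / 3 := le_trans (he_mono (by omega)) (he_step k)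
    have h2 : e (2*k+1) ≤ e k / 9 := by
      have : e (2*k+1) ≤ e (k+2) := he_mono (by omega)
      have h' : e (k+2) ≤ e (k+1) / 3 := he_step (k+1)
      have h'' : e (k+1) ≤ e k / 3 := he_step k
      linarith
    have h3 : e (2*k+1) ≤ 1/12 := le_trans (he_mono (by omega)) he1
    have hprod : (1 + e (2*k)) * (1 + e (2*k+1)) < 1 + e k := by
      have := he_pos (2*k); have := he_pos (2*k+1); have := he_pos k
      nlinarith
    rw [← Real.log_mul (by nlinarith [he_pos (2*k)]) (by nlinarith [he_pos (2*k+1)])]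
    apply Real.log_lt_log (by nlinarith [he_pos (2*k), he_pos (2*k+1)]) hprod
  -- step inequality for g k = f (2k) / f k
  have hstep : ∀ k, 1 ≤ k → f (2*(k+1)) / f (k+1) < f (2*k) / f k := by
    intro k hk
    have hF : 0 < f k := hfpos k hk
    have hFk1 : 0 < f (k+1) := hfpos (k+1) (by omega)
    have hlt : f k < f (2*k) := hfmono (by omega)
    have h2k2 : f (2*(k+1)) = f (2*k) + (Real.log (1 + e (2*k)) + Real.log (1 + e (2*k+1))) := by
      have : 2*(k+1) = (2*k+1)+1 := by ring
      rw [this, hfrec (2*k+1), hfrec (2*k)]; ring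
    have hk1 : f (k+1) = f k + Real.log (1 + e k) := hfrec k
    rw [div_lt_div_iff₀ hFk1 hF, h2k2, hk1]
    have hΔ := hkey k hk
    have hΔpos : 0 < Real.log (1 + e (2*k)) + Real.log (1 + e (2*k+1)) := by
      nlinarith [hd_pos (2*k), hd_pos (2*k+1)]
    nlinarith [hd_pos k]
  -- chain
  have hchain : ∀ n : ℕ, ∀ k, 1 ≤ k → f (2*(k+1+n)) / f (k+1+n) < f (2*k) / f k := by
    intro n
    induction n with
    | zero => intro k hk; simpa using hstep k hk
    | succ m ih =>
      intro k hk
      have h1 := hstep (k+1+m) (by omega)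
      have h2 := ih k hk
      have : k+1+(m+1) = (k+1+m)+1 := by ring
      rw [this]
      exact lt_trans h1 h2
  have hmain : f (2*t) / f t < f (2*s) / f s := by
    have ht : t = s + 1 + (t - s - 1) := by omega
    rw [ht]
    exact hchain (t - s - 1) s hs
  -- identify x (r^k) with f (2k) / f k
  have hxg : ∀ k, x (r ^ k) = f (2*k) / f k := by
    intro k
    rw [hx]
    have h2 : (r ^ k) ^ 2 = r ^ (2*k) := by rw [← pow_mul]; ring_nf
    rw [h2, sigma5 hr, sigma5 hr]
    simp only [hf]
    congr 2 <;> push_cast <;> ring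
  rw [hxg t, hxg s]
  exact hmain
end

section
/- If N = q^k · n² is an odd perfect number given in Eulerian form, then I(n) > (8/5)^{ln(4/3)/ln(13/9)} ≈ 1.44440557, where I(m) = σ(m)/m. -/
open Real Set

noncomputable def tt : ℝ := Real.log (13/9) / Real.log (4/3)

lemma log43_pos : 0 < Real.log (4/3) := Real.log_pos (by norm_num)
lemma log139_pos : 0 < Real.log (13/9) := Real.log_pos (by norm_num)

lemma tt_pos : 0 < tt := div_pos log139_pos log43_pos

lemma tt_ge : (6:ℝ)/5 ≤ tt := by
  rw [tt, le_div_iff₀ log43_pos]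
  have h : ((4:ℝ)/3)^(6:ℕ) ≤ ((13:ℝ)/9)^(5:ℕ) := by norm_num
  have := Real.log_le_log (by positivity) h
  rw [Real.log_pow, Real.log_pow] at this
  push_cast at this
  linarith

lemma gderiv2 : ∀ x ∈ Ioo (0:ℝ) (1/3),
    HasDerivWithinAt (fun x : ℝ => tt * (1+x)⁻¹ - (1+2*x)/(1+x+x^2))
      (tt * (-(1*(1+x)^2)⁻¹) - (2*(1+x+x^2) - (1+2*x)*(1+2*x))/(1+x+x^2)^2)
      (Ioo (0:ℝ) (1/3)) x := by
  intro x hx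
  have h1 : (1:ℝ)+x+x^2 ≠ 0 := by nlinarith [sq_nonneg x, sq_nonneg (1+x)]
  have h2 : (1:ℝ)+x ≠ 0 := by nlinarith [hx.1]
  have d1 : HasDerivAt (fun x : ℝ => (1+x)⁻¹) (-(1*(1+x)^2)⁻¹) x := by
    have := ((hasDerivAt_id x).const_add (1:ℝ)).inv h2
    refine this.congr_deriv ?_
    simp only [id, one_mul]; ring
  have d2 : HasDerivAt (fun x : ℝ => (1+2*x)/(1+x+x^2))
      ((2*(1+x+x^2) - (1+2*x)*(1+2*x))/(1+x+x^2)^2) x := by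
    have du : HasDerivAt (fun x : ℝ => 1+2*x) 2 x := by
      simpa using ((hasDerivAt_id x).const_mul (2:ℝ)).const_add (1:ℝ)
    have dv : HasDerivAt (fun x : ℝ => 1+x+x^2) (1+2*x) x := by
      have := ((hasDerivAt_id x).const_add (1:ℝ)).add (hasDerivAt_pow 2 x)
      refine this.congr_deriv ?_
      norm_num
    have := du.div dv h1
    exact this
  exact ((d1.const_mul tt).sub d2).hasDerivWithinAt

lemma gconcave : ConcaveOn ℝ (Icc (0:ℝ) (1/3))
    (fun x : ℝ => tt * Real.log (1+x) - Real.log (1+x+x^2)) := by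
  apply concaveOn_of_hasDerivWithinAt2_nonpos (convex_Icc _ _)
    (f' := fun x : ℝ => tt * (1+x)⁻¹ - (1+2*x)/(1+x+x^2))
    (f'' := fun x : ℝ => tt * (-(1*(1+x)^2)⁻¹) - (2*(1+x+x^2) - (1+2*x)*(1+2*x))/(1+x+x^2)^2)
  · apply ContinuousOn.sub
    · apply ContinuousOn.mul continuousOn_const
      apply Real.continuousOn_log.comp (by fun_prop)
      intro x hx
      simp only [mem_Icc] at hx
      simp only [Set.mem_compl_iff, Set.mem_singleton_iff]
      nlinarith [hx.1]
    · apply Real.continuousOn_log.comp (by fun_prop)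
      intro x hx
      simp only [mem_Icc] at hx
      simp only [Set.mem_compl_iff, Set.mem_singleton_iff]
      nlinarith [hx.1, sq_nonneg x]
  · intro x hx
    rw [interior_Icc] at hx
    have h1 : (1:ℝ)+x+x^2 ≠ 0 := by nlinarith [hx.1, sq_nonneg x]
    have h2 : (1:ℝ)+x ≠ 0 := by nlinarith [hx.1]
    have d1 : HasDerivAt (fun x : ℝ => Real.log (1+x)) (1+x)⁻¹ x := by
      have := (Real.hasDerivAt_log h2).comp x ((hasDerivAt_id x).const_add (1:ℝ))
      exact this.congr_deriv (by simp)
    have d2 : HasDerivAt (fun x : ℝ => Real.log (1+x+x^2)) ((1+x)⁻¹*0 + (1+2*x)/(1+x+x^2)) x := by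
      have dv : HasDerivAt (fun x : ℝ => 1+x+x^2) (1+2*x) x := by
        have := ((hasDerivAt_id x).const_add (1:ℝ)).add (hasDerivAt_pow 2 x)
        refine this.congr_deriv ?_
        norm_num
      have := (Real.hasDerivAt_log h1).comp x dv
      refine this.congr_deriv ?_
      ring
    have := (d1.const_mul tt).sub d2
    rw [interior_Icc]
    apply HasDerivAt.hasDerivWithinAt
    refine this.congr_deriv ?_
    ring
  · intro x hx
    rw [interior_Icc] at hx
    rw [interior_Icc]
    exact gderiv2 x hx
  · intro x hx
    rw [interior_Icc] at hx
    have hx0 := hx.1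
    have hx3 := hx.2
    have h1 : (0:ℝ) < 1+x+x^2 := by nlinarith
    have h2 : (0:ℝ) < 1+x := by linarith
    have key : 0 ≤ 2*(1+x+x^2) - (1+2*x)*(1+2*x) := by nlinarith
    have t0 := tt_pos
    have : tt * (-(1*(1+x)^2)⁻¹) ≤ 0 := by
      apply mul_nonpos_of_nonneg_of_nonpos (le_of_lt t0)
      simp only [one_mul]
      rw [neg_nonpos]
      positivity
    have : (2*(1+x+x^2) - (1+2*x)*(1+2*x))/(1+x+x^2)^2 ≥ 0 := by positivity
    linarith

lemma concave1 (x : ℝ) (hx0 : 0 ≤ x) (hx3 : x ≤ 1/3) :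
    Real.log (1+x+x^2) ≤ tt * Real.log (1+x) := by
  have hg := gconcave
  have h0 : (0:ℝ) ∈ Icc (0:ℝ) (1/3) := by norm_num
  have h3 : (1/3:ℝ) ∈ Icc (0:ℝ) (1/3) := by norm_num
  have ha : (0:ℝ) ≤ 1 - 3*x := by linarith
  have hb : (0:ℝ) ≤ 3*x := by linarith
  have hab : (1 - 3*x) + 3*x = 1 := by ring
  have := hg.2 h0 h3 ha hb hab
  simp only [smul_eq_mul, mul_zero, zero_add] at this
  have hxx : 3*x*(1/3:ℝ) = x := by ring
  rw [hxx] at this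
  have e0 : tt * Real.log (1+(0:ℝ)) - Real.log (1+0+0^2) = 0 := by norm_num
  have e3 : tt * Real.log (1+(1/3:ℝ)) - Real.log (1+1/3+(1/3)^2) = 0 := by
    have h43 : (1:ℝ)+1/3 = 4/3 := by norm_num
    have h139 : (1:ℝ)+1/3+(1/3)^2 = 13/9 := by norm_num
    rw [h139, h43, tt, div_mul_cancel₀]
    · ring
    · exact ne_of_gt log43_pos
  rw [e0, e3] at this
  linarith

open ArithmeticFunction Finset
open scoped ArithmeticFunction.sigma

lemma sigma_cast (p a : ℕ) (hp : p.Prime) :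
    ((σ 1 (p^a) : ℕ) : ℝ) * ((p:ℝ) - 1) = (p:ℝ)^(a+1) - 1 := by
  rw [ArithmeticFunction.sigma_one_apply_prime_pow hp]
  push_cast
  exact geom_sum_mul (p:ℝ) (a+1)

lemma sigma_pos' (m : ℕ) (hm : 0 < m) : 0 < σ 1 m := by
  rw [ArithmeticFunction.sigma_one_apply]
  apply Finset.sum_pos
  · intro i hi; exact Nat.pos_of_mem_divisors hi
  · exact ⟨m, Nat.mem_divisors_self m (by omega)⟩

set_option maxHeartbeats 1000000 in
lemma primepow (p a : ℕ) (hp : p.Prime) (hp3 : 3 ≤ p) (ha : 1 ≤ a) :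
    ((σ 1 ((p^a)^2) : ℕ) : ℝ) / ((p:ℝ)^a)^2 ≤
      (((σ 1 (p^a) : ℕ) : ℝ) / (p:ℝ)^a) ^ tt := by
  have hp0 : (0:ℝ) < p := by positivity
  have hp3' : (3:ℝ) ≤ p := by exact_mod_cast hp3
  set x : ℝ := (p:ℝ)⁻¹ with hxdef
  have hx0 : 0 < x := by positivity
  have hx3 : x ≤ 1/3 := by
    rw [hxdef, inv_le_comm₀ hp0 (by norm_num)]
    linarith
  have hx1 : x < 1 := by linarith
  set A : ℝ := ((σ 1 (p^a) : ℕ) : ℝ) / (p:ℝ)^a with hAdef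
  set B : ℝ := ((σ 1 ((p^a)^2) : ℕ) : ℝ) / ((p:ℝ)^a)^2 with hBdef
  have hsq : (p^a)^2 = p^(2*a) := by ring
  have hxp : x * (p:ℝ) = 1 := inv_mul_cancel₀ (ne_of_gt hp0)
  have hdiv : A * (p:ℝ)^a = ((σ 1 (p^a) : ℕ) : ℝ) :=
    div_mul_cancel₀ _ (by positivity)
  have hxpow1 : x^(a+1) * (p:ℝ)^(a+1) = 1 := by rw [← mul_pow, hxp, one_pow]
  have e1 : A * (x - 1) = x^(a+1) - 1 := by
    apply mul_right_cancel₀ (pow_ne_zero (a+1) (ne_of_gt hp0))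
    calc A*(x-1)*(p:ℝ)^(a+1)
        = (A*(p:ℝ)^a)*((x*(p:ℝ)) - (p:ℝ)) := by rw [pow_succ]; ring
      _ = -(((σ 1 (p^a) : ℕ) : ℝ)*((p:ℝ)-1)) := by rw [hdiv, hxp]; ring
      _ = -((p:ℝ)^(a+1) - 1) := by rw [sigma_cast p a hp]
      _ = (x^(a+1)-1)*(p:ℝ)^(a+1) := by rw [sub_mul, hxpow1]; ring
  have hdiv2 : B * (p:ℝ)^(2*a) = ((σ 1 (p^(2*a)) : ℕ) : ℝ) := by
    rw [hBdef, hsq]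
    have hcc : ((p:ℝ)^a)^2 = (p:ℝ)^(2*a) := by rw [← pow_mul, mul_comm]
    rw [hcc]
    exact div_mul_cancel₀ _ (by positivity)
  have hxpow2 : x^(2*a+1) * (p:ℝ)^(2*a+1) = 1 := by rw [← mul_pow, hxp, one_pow]
  have e2 : B * (x - 1) = x^(2*a+1) - 1 := by
    apply mul_right_cancel₀ (pow_ne_zero (2*a+1) (ne_of_gt hp0))
    calc B*(x-1)*(p:ℝ)^(2*a+1)
        = (B*(p:ℝ)^(2*a))*((x*(p:ℝ)) - (p:ℝ)) := by rw [pow_succ]; ring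
      _ = -(((σ 1 (p^(2*a)) : ℕ) : ℝ)*((p:ℝ)-1)) := by rw [hdiv2, hxp]; ring
      _ = -((p:ℝ)^(2*a+1) - 1) := by rw [sigma_cast p (2*a) hp]
      _ = (x^(2*a+1)-1)*(p:ℝ)^(2*a+1) := by rw [sub_mul, hxpow2]; ring
  have hxm1 : x - 1 ≠ 0 := by linarith
  have hApos : 0 < A := by
    apply div_pos _ (by positivity)
    exact_mod_cast sigma_pos' _ (pow_pos hp.pos a)
  have hBpos : 0 < B := by
    apply div_pos _ (by positivity)
    exact_mod_cast sigma_pos' _ (pow_pos (pow_pos hp.pos a) 2)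
  have hA1x : 1 + x ≤ A := by
    have hxa2 : x^(a+1) ≤ x^2 := pow_le_pow_of_le_one (le_of_lt hx0) (le_of_lt hx1) (by omega)
    have hkey : (1+x-A)*(1-x) = x^(a+1) - x^2 := by linear_combination e1
    nlinarith [hkey, hxa2, hx1]
  rw [← Real.log_le_log_iff hBpos (Real.rpow_pos_of_pos hApos tt),
    Real.log_rpow hApos]
  rcases eq_or_lt_of_le ha with h1 | h2
  · -- a = 1
    have ha1 : a = 1 := h1.symm
    subst ha1
    have eA : A = 1 + x := by
      apply mul_right_cancel₀ hxm1
      rw [e1]; ring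
    have eB : B = 1 + x + x^2 := by
      apply mul_right_cancel₀ hxm1
      rw [e2]; ring
    rw [eA, eB]
    exact concave1 x (le_of_lt hx0) hx3
  · -- a ≥ 2
    have ha2 : 2 ≤ a := h2
    have hs : x^(2*a+2) ≤ x^(2*a+1) :=
      pow_le_pow_of_le_one (le_of_lt hx0) (le_of_lt hx1) (by omega)
    have hq2 : x^(a+1) * x^(a+1) = x^(2*a+2) := by rw [← pow_add]; ring_nf
    have hBle : B ≤ A * (1 + x^(a+1)) := by
      have hkey2 : (A*(1+x^(a+1)) - B)*(1-x) = x^(2*a+1) - x^(2*a+2) := by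
        linear_combination (-(1 + x^(a+1))) * e1 + e2 + hq2
      nlinarith [hkey2, hs, hx1]
    have h1p : (0:ℝ) < 1 + x^(a+1) := by positivity
    have hlog1 : Real.log B ≤ Real.log A + Real.log (1 + x^(a+1)) := by
      rw [← Real.log_mul (ne_of_gt hApos) (ne_of_gt h1p)]
      exact Real.log_le_log hBpos hBle
    have hlog2 : Real.log (1 + x^(a+1)) ≤ x^(a+1) := by
      have := Real.log_le_sub_one_of_pos h1p
      linarith
    have hlog3 : x^(a+1) ≤ x^3 :=
      pow_le_pow_of_le_one (le_of_lt hx0) (le_of_lt hx1) (by omega)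
    have hlogA : 3*x/4 ≤ Real.log A := by
      have hx1p : (0:ℝ) < 1+x := by linarith
      have h1 : Real.log (1+x) ≤ Real.log A := Real.log_le_log hx1p hA1x
      have h2 : 1 - (1+x)⁻¹ ≤ Real.log (1+x) := Real.one_sub_inv_le_log_of_pos hx1p
      have h4 : 1 - (1+x)⁻¹ = x/(1+x) := by field_simp; ring
      have h3 : 3*x/4 ≤ x/(1+x) := by
        rw [div_le_div_iff₀ (by norm_num) hx1p]
        nlinarith
      linarith
    have htt : (6:ℝ)/5 ≤ tt := tt_ge
    have hx3cube : x^3 ≤ 3*x/20 := by nlinarith [sq_nonneg x]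
    have hfinal : (1/5) * (3*x/4) ≤ (tt - 1) * Real.log A :=
      mul_le_mul (by linarith) hlogA (by linarith) (by linarith)
    nlinarith [hlog1, hlog2, hlog3, hfinal]

lemma mult_lemma : ∀ m : ℕ, Odd m →
    ((σ 1 (m^2) : ℕ) : ℝ) / ((m:ℝ))^2 ≤ (((σ 1 m : ℕ) : ℝ) / (m:ℝ)) ^ tt := by
  intro m
  induction m using Nat.recOnPosPrimePosCoprime with
  | prime_pow p a hpp hapos =>
    intro hodd
    have hp : p.Prime := hpp
    have hpne2 : p ≠ 2 := by
      rintro rfl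
      have : Even ((2:ℕ)^a) := by
        exact (Nat.even_pow).2 ⟨even_two, by omega⟩
      exact (Nat.not_even_iff_odd.2 hodd) this
    have hp3 : 3 ≤ p := by
      have := hp.two_le
      omega
    have := primepow p a hp hp3 hapos
    convert this using 2 <;> push_cast <;> ring
  | zero =>
    intro h
    simp [Nat.odd_iff] at h
  | one =>
    intro _
    norm_num [ArithmeticFunction.sigma_one_apply]
  | coprime a b ha hb hab iha ihb =>
    intro hodd
    have hoa : Odd a := (Nat.odd_mul.1 hodd).1
    have hob : Odd b := (Nat.odd_mul.1 hodd).2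
    have ha0 : (0:ℝ) < a := by exact_mod_cast Nat.lt_of_lt_of_le Nat.zero_lt_one (le_of_lt ha)
    have hb0 : (0:ℝ) < b := by exact_mod_cast Nat.lt_of_lt_of_le Nat.zero_lt_one (le_of_lt hb)
    have e1 : σ 1 (a*b) = σ 1 a * σ 1 b :=
      ArithmeticFunction.isMultiplicative_sigma.map_mul_of_coprime hab
    have e2 : σ 1 ((a*b)^2) = σ 1 (a^2) * σ 1 (b^2) := by
      rw [mul_pow]
      exact ArithmeticFunction.isMultiplicative_sigma.map_mul_of_coprime (Nat.Coprime.pow 2 2 hab)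
    have hA := iha hoa
    have hB := ihb hob
    have hsa : (0:ℝ) ≤ ((σ 1 (a^2) : ℕ) : ℝ) / ((a:ℝ))^2 := by positivity
    have hsb : (0:ℝ) ≤ ((σ 1 (b^2) : ℕ) : ℝ) / ((b:ℝ))^2 := by positivity
    have hra : (0:ℝ) ≤ ((σ 1 a : ℕ) : ℝ) / (a:ℝ) := by positivity
    have hrb : (0:ℝ) ≤ ((σ 1 b : ℕ) : ℝ) / (b:ℝ) := by positivity
    calc ((σ 1 ((a*b)^2) : ℕ) : ℝ) / ((a*b : ℕ):ℝ)^2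
        = (((σ 1 (a^2) : ℕ) : ℝ)/((a:ℝ))^2) * (((σ 1 (b^2) : ℕ) : ℝ)/((b:ℝ))^2) := by
          rw [e2]; push_cast; ring
      _ ≤ ((((σ 1 a : ℕ) : ℝ)/(a:ℝ)) ^ tt) * ((((σ 1 b : ℕ) : ℝ)/(b:ℝ)) ^ tt) := by
          apply mul_le_mul hA hB hsb (Real.rpow_nonneg hra tt)
      _ = ((((σ 1 a : ℕ) : ℝ)/(a:ℝ)) * (((σ 1 b : ℕ) : ℝ)/(b:ℝ))) ^ tt := by
          rw [← Real.mul_rpow hra hrb]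
      _ = (((σ 1 (a*b) : ℕ) : ℝ) / ((a*b : ℕ):ℝ)) ^ tt := by
          rw [e1]; push_cast; congr 1; ring

theorem stmt_8 (N q k n : ℕ) (hodd : Odd N) (hperf : ArithmeticFunction.sigma 1 N = 2 * N)
    (hq : q.Prime) (hq4 : q % 4 = 1) (hk4 : k % 4 = 1)
    (hgcd : Nat.gcd q n = 1) (hN : N = q ^ k * n ^ 2) :
    ((8 : ℝ) / 5) ^ (Real.log (4 / 3) / Real.log (13 / 9)) <
      (ArithmeticFunction.sigma 1 n : ℝ) / n := by
  have hq5 : 5 ≤ q := by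
    have := hq.two_le
    omega
  have hn0 : n ≠ 0 := by
    rintro rfl
    rw [hN] at hodd
    simp [Nat.odd_iff] at hodd
  have hon : Odd n := by
    rw [hN] at hodd
    have h2 : Odd (n^2) := (Nat.odd_mul.1 hodd).2
    rcases Nat.even_or_odd n with he | ho
    · exfalso
      have : Even (n^2) := by
        rw [sq]; exact he.mul_right n
      exact (Nat.not_even_iff_odd.2 h2) this
    · exact ho
  -- coprimality and multiplicativity
  have hco : Nat.Coprime (q^k) (n^2) := Nat.Coprime.pow k 2 hgcd
  have hsig : σ 1 (q^k) * σ 1 (n^2) = 2 * (q^k * n^2) := by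
    rw [← ArithmeticFunction.isMultiplicative_sigma.map_mul_of_coprime hco, ← hN, hperf, hN]
  -- real versions
  have hq0 : (0:ℝ) < q := by positivity
  have hq5' : (5:ℝ) ≤ q := by exact_mod_cast hq5
  have hqk0 : (0:ℝ) < (q:ℝ)^k := by positivity
  have hn0' : (0:ℝ) < n := by exact_mod_cast Nat.pos_of_ne_zero hn0
  have hSq : ((σ 1 (q^k) : ℕ) : ℝ) * ((q:ℝ) - 1) = (q:ℝ)^(k+1) - 1 := sigma_cast q k hq
  have hSqlt : ((σ 1 (q^k) : ℕ) : ℝ) < (5/4) * (q:ℝ)^k := by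
    have h1 : (q:ℝ)^(k+1) = (q:ℝ)^k * q := pow_succ _ _
    nlinarith [hSq, hqk0]
  have hSn2pos : (0:ℝ) < ((σ 1 (n^2) : ℕ) : ℝ) := by
    exact_mod_cast sigma_pos' _ (pow_pos (Nat.pos_of_ne_zero hn0) 2)
  have hsig' : ((σ 1 (q^k) : ℕ) : ℝ) * ((σ 1 (n^2) : ℕ) : ℝ) = 2 * ((q:ℝ)^k * (n:ℝ)^2) := by
    exact_mod_cast congrArg (Nat.cast : ℕ → ℝ) hsig
  have hIn2 : (8/5 : ℝ) < ((σ 1 (n^2) : ℕ) : ℝ) / ((n:ℝ))^2 := by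
    rw [lt_div_iff₀ (by positivity)]
    nlinarith [hsig', hSqlt, hSn2pos, hqk0]
  have hkey := mult_lemma n hon
  have hs : (8/5 : ℝ) < (((σ 1 n : ℕ) : ℝ) / (n:ℝ)) ^ tt := lt_of_lt_of_le hIn2 hkey
  have hrpos : (0:ℝ) ≤ ((σ 1 n : ℕ) : ℝ) / (n:ℝ) := by positivity
  have he : 0 < Real.log (4/3) / Real.log (13/9) := div_pos log43_pos log139_pos
  have h85 : (0:ℝ) ≤ 8/5 := by norm_num
  have hlt := Real.rpow_lt_rpow h85 hs he
  rw [← Real.rpow_mul hrpos] at hlt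
  have hone : tt * (Real.log (4/3) / Real.log (13/9)) = 1 := by
    rw [tt]
    field_simp
  rw [hone, Real.rpow_one] at hlt
  exact hlt
end

section
/- If N = q^k · n² is an odd perfect number given in Eulerian form, then q < n·√3. -/
open Finset ArithmeticFunction
open scoped ArithmeticFunction.sigma

lemma aux_two_sigma_lt (p : ℕ) (hp : 3 ≤ p) (m : ℕ) :
    2 * (∑ i ∈ range (m + 1), p ^ i) < 3 * p ^ m := by
  induction m with
  | zero => simp
  | succ m ih =>
      rw [sum_range_succ]
      have h3 : 3 * p ^ m ≤ p ^ (m + 1) := by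
        calc 3 * p ^ m ≤ p * p ^ m := Nat.mul_le_mul_right _ hp
          _ = p ^ (m+1) := by ring
      have hsum : p ^ (m+1) = p ^ m * p := pow_succ p m
      omega

lemma aux_S_bound (p : ℕ) (hp : 3 ≤ p) (e : ℕ) :
    2 * (∑ i ∈ range e, p ^ i) + 1 ≤ p ^ e := by
  induction e with
  | zero => simp
  | succ e ih =>
      rw [sum_range_succ]
      have h3 : 3 * p ^ e ≤ p ^ (e + 1) := by
        calc 3 * p ^ e ≤ p * p ^ e := Nat.mul_le_mul_right _ hp
          _ = p ^ (e+1) := by ring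
      omega

lemma aux_not_dvd_sum (p : ℕ) (hp : 2 ≤ p) (m : ℕ) :
    ¬ p ∣ (∑ i ∈ range (m + 1), p ^ i) := by
  intro h
  rw [Finset.sum_range_succ'] at h
  simp only [pow_zero] at h
  have h2 : p ∣ ∑ i ∈ range m, p ^ (i + 1) :=
    Finset.dvd_sum fun i _ => dvd_pow_self p (Nat.succ_ne_zero i)
  have h1 : p ∣ 1 := (Nat.dvd_add_right h2).mp h
  have := Nat.le_of_dvd one_pos h1
  omega

lemma aux_split (p e m : ℕ) (h : e ≤ m + 1) :
    ∃ d, (∑ i ∈ range (m + 1), p ^ i) = (∑ i ∈ range e, p ^ i) + p ^ e * d := by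
  have hs := Finset.sum_range_add_sum_Ico (fun i => p ^ i) h
  have hdvd : p ^ e ∣ ∑ i ∈ Ico e (m + 1), p ^ i :=
    Finset.dvd_sum fun i hi => pow_dvd_pow p (Finset.mem_Ico.mp hi).1
  obtain ⟨d, hd⟩ := hdvd
  exact ⟨d, by rw [← hs, hd]⟩

lemma aux_sq_ineq (c : ℕ) : 2 * c ≤ c ^ 2 + 1 := by
  cases c with
  | zero => simp
  | succ m => ring_nf; nlinarith [sq_nonneg m]

/-- The core number-theoretic contradiction, case k = 1 (Acquaah–Konyagin). -/
lemma aux_k1 (q n : ℕ) (hq : q.Prime) (hqodd : q % 2 = 1) (hn : 2 ≤ n)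
    (hnodd : n % 2 = 1) (hmul1 : (q + 1) * (σ 1 (n ^ 2)) = 2 * (q * n ^ 2))
    (hq2 : 3 * n ^ 2 ≤ q ^ 2) : False := by
  have hq2' := hq.two_le
  have hn0 : n ≠ 0 := by omega
  have hn2 : (n ^ 2 : ℕ) ≠ 0 := pow_ne_zero _ hn0
  -- s and t
  obtain ⟨s, hs⟩ : ∃ s, q + 1 = 2 * s := ⟨(q + 1) / 2, by omega⟩
  have hs0 : s ≠ 0 := by omega
  have hdvd2 : (q + 1) ∣ 2 * n ^ 2 := by
    have h1 : (q + 1) ∣ (2 * n ^ 2) * q := ⟨σ 1 (n ^ 2), by rw [hmul1]; ring⟩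
    have hco1 : Nat.Coprime (q + 1) q := by simp
    exact hco1.dvd_of_dvd_mul_right h1
  obtain ⟨t, ht'⟩ := hdvd2
  have ht : n ^ 2 = s * t := by
    have h2 : 2 * n ^ 2 = 2 * (s * t) := by rw [ht', hs]; ring
    omega
  have ht0 : t ≠ 0 := by
    intro h; rw [h, mul_zero] at ht; exact hn2 ht
  have hσnt : σ 1 (n ^ 2) = q * t := by
    have h3 : (q + 1) * (σ 1 (n ^ 2)) = (q + 1) * (q * t) := by
      rw [hmul1, ht, hs]; ring
    exact Nat.eq_of_mul_eq_mul_left (by omega) h3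
  -- find the prime power component p^{2a} with q ∣ σ(p^{2a})
  have hqdvdσ : q ∣ σ 1 (n ^ 2) := ⟨t, hσnt⟩
  rw [isMultiplicative_sigma.multiplicative_factorization _ hn2] at hqdvdσ
  unfold Finsupp.prod at hqdvdσ
  obtain ⟨p, hp_mem, hpdvd⟩ := hq.prime.exists_mem_finset_dvd hqdvdσ
  have hpprime : p.Prime :=
    Nat.prime_of_mem_primeFactors (by rwa [Nat.support_factorization] at hp_mem)
  have hpdvdn : p ∣ n := by
    have : p ∣ n ^ 2 := Nat.dvd_of_mem_primeFactors
      (by rwa [Nat.support_factorization] at hp_mem)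
    exact hpprime.dvd_of_dvd_pow this
  have hp3 : 3 ≤ p := by
    have h2 := hpprime.two_le
    have hpne2 : p ≠ 2 := by
      rintro rfl
      obtain ⟨m, hm⟩ := hpdvdn
      omega
    omega
  set a := n.factorization p with ha_def
  have ha1 : 1 ≤ a := hpprime.factorization_pos_of_dvd hn0 hpdvdn
  have hfa : (n ^ 2).factorization p = 2 * a := by rw [Nat.factorization_pow]; simp; rfl
  rw [hfa] at hpdvd
  -- r, c
  set r := n / p ^ a with hr_def
  have hnr : p ^ a * r = n := Nat.ordProj_mul_ordCompl_eq_self n p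
  have hpr : ¬ p ∣ r := Nat.not_dvd_ordCompl hpprime hn0
  have hr0 : r ≠ 0 := by
    intro h; rw [h, mul_zero] at hnr; exact hn0 hnr.symm
  obtain ⟨c, hc'⟩ := hpdvd
  have hc : σ 1 (p ^ (2 * a)) = q * c := hc'
  have hσp : σ 1 (p ^ (2 * a)) = ∑ i ∈ range (2 * a + 1), p ^ i :=
    sigma_one_apply_prime_pow hpprime
  have hσp0 : σ 1 (p ^ (2 * a)) ≠ 0 := by
    rw [hσp]
    have : 0 < ∑ i ∈ range (2 * a + 1), p ^ i :=
      Finset.sum_pos (fun i _ => Nat.pow_pos (by omega)) ⟨0, by simp⟩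
    omega
  have hc0 : c ≠ 0 := by
    intro h; rw [h, mul_zero] at hc; exact hσp0 hc
  have hn2eq : n ^ 2 = p ^ (2 * a) * r ^ 2 := by
    rw [← hnr]; ring
  have hcopr : Nat.Coprime (p ^ (2 * a)) (r ^ 2) :=
    Nat.Coprime.pow _ _ ((hpprime.coprime_iff_not_dvd).mpr hpr)
  have hσsplit : σ 1 (n ^ 2) = σ 1 (p ^ (2 * a)) * σ 1 (r ^ 2) := by
    rw [hn2eq, isMultiplicative_sigma.map_mul_of_coprime hcopr]
  have htc : t = c * σ 1 (r ^ 2) := by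
    have h4 : q * t = q * (c * σ 1 (r ^ 2)) := by
      rw [← hσnt, hσsplit, hc]; ring
    exact Nat.eq_of_mul_eq_mul_left (by omega) h4
  -- F1 : 4 c² r² < 3 p^{2a}
  have hF1 : 4 * (c ^ 2 * r ^ 2) < 3 * p ^ (2 * a) := by
    have hb : 2 * (q * c) < 3 * p ^ (2 * a) := by
      rw [← hc, hσp]; exact aux_two_sigma_lt p hp3 (2 * a)
    have hsq : (2 * (q * c)) ^ 2 < (3 * p ^ (2 * a)) ^ 2 :=
      Nat.pow_lt_pow_left hb (by norm_num)
    have hq2n : 3 * (p ^ (2 * a) * r ^ 2) ≤ q ^ 2 := by rw [← hn2eq]; exact hq2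
    -- 12 P r² c² ≤ 4 q² c² < 9 P²  ⇒  4 c² r² < 3 P
    have h5 : (3 * p ^ (2 * a)) * (4 * (c ^ 2 * r ^ 2)) < (3 * p ^ (2 * a)) * (3 * p ^ (2 * a)) := by
      calc (3 * p ^ (2 * a)) * (4 * (c ^ 2 * r ^ 2))
          = (3 * (p ^ (2 * a) * r ^ 2)) * (4 * c ^ 2) := by ring
        _ ≤ q ^ 2 * (4 * c ^ 2) := Nat.mul_le_mul_right _ hq2n
        _ = (2 * (q * c)) ^ 2 := by ring
        _ < (3 * p ^ (2 * a)) ^ 2 := hsq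
        _ = (3 * p ^ (2 * a)) * (3 * p ^ (2 * a)) := by ring
    exact Nat.lt_of_mul_lt_mul_left h5
  -- e, u
  set e := s.factorization p with he_def
  set u := s / p ^ e with hu_def
  have hsu : p ^ e * u = s := Nat.ordProj_mul_ordCompl_eq_self s p
  have hpu : ¬ p ∣ u := Nat.not_dvd_ordCompl hpprime hs0
  have hu0 : u ≠ 0 := by
    intro h; rw [h, mul_zero] at hsu; exact hs0 hsu.symm
  have hsdvd : s ∣ n ^ 2 := ⟨t, ht⟩
  have he2a : e ≤ 2 * a := by
    have := (Nat.factorization_le_iff_dvd hs0 hn2).mpr hsdvd p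
    rwa [hfa] at this
  -- p^{2a-e} divides σ(r²)
  have hPB : p ^ e * p ^ (2 * a - e) = p ^ (2 * a) := by
    rw [← pow_add]; congr 1; omega
  have hut : u * t = p ^ (2 * a - e) * r ^ 2 := by
    have h6 : p ^ e * (u * t) = p ^ e * (p ^ (2 * a - e) * r ^ 2) := by
      calc p ^ e * (u * t) = (p ^ e * u) * t := by ring
        _ = s * t := by rw [hsu]
        _ = n ^ 2 := ht.symm
        _ = p ^ (2 * a) * r ^ 2 := hn2eq
        _ = p ^ e * (p ^ (2 * a - e) * r ^ 2) := by rw [← hPB]; ring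
    exact Nat.eq_of_mul_eq_mul_left (Nat.pow_pos (by omega)) h6
  have hcpu : Nat.Coprime (p ^ (2 * a - e)) u :=
    Nat.Coprime.pow_left _ ((hpprime.coprime_iff_not_dvd).mpr hpu)
  have hBt : p ^ (2 * a - e) ∣ t := by
    have h7 : p ^ (2 * a - e) ∣ u * t := ⟨r ^ 2, hut⟩
    exact hcpu.dvd_of_dvd_mul_left h7
  have hpc : ¬ p ∣ c := by
    intro h
    have h8 : p ∣ σ 1 (p ^ (2 * a)) := by rw [hc]; exact Dvd.dvd.mul_left h _
    rw [hσp] at h8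
    exact aux_not_dvd_sum p (by omega) (2 * a) h8
  have hcpc : Nat.Coprime (p ^ (2 * a - e)) c :=
    Nat.Coprime.pow_left _ ((hpprime.coprime_iff_not_dvd).mpr hpc)
  have hBσr : p ^ (2 * a - e) ∣ σ 1 (r ^ 2) := by
    rw [htc] at hBt
    exact hcpc.dvd_of_dvd_mul_left hBt
  have hσr0 : σ 1 (r ^ 2) ≠ 0 := by
    intro h; rw [htc, h, mul_zero] at ht0; exact ht0 rfl
  have hF4 : p ^ (2 * a - e) ≤ σ 1 (r ^ 2) := Nat.le_of_dvd (by omega) hBσr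
  -- F2 : p^e + 1 ≤ 2c
  have hF2 : p ^ e + 1 ≤ 2 * c := by
    obtain ⟨d, hd⟩ := aux_split p e (2 * a) (by omega)
    set S := ∑ i ∈ range e, p ^ i with hS_def
    have h1 : (σ 1 (p ^ (2 * a)) : ℤ) = (q : ℤ) * c := by exact_mod_cast hc
    have h2nat : σ 1 (p ^ (2 * a)) = S + p ^ e * d := by rw [hσp]; exact hd
    have h2 : (σ 1 (p ^ (2 * a)) : ℤ) = (S : ℤ) + (p : ℤ) ^ e * d := by
      exact_mod_cast h2nat
    have h3 : (q : ℤ) + 1 = 2 * ((p : ℤ) ^ e * u) := by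
      have : q + 1 = 2 * (p ^ e * u) := by rw [hsu, ← hs]
      exact_mod_cast this
    have key : (c : ℤ) + S = (p : ℤ) ^ e * (2 * u * c - d) := by
      linear_combination (c : ℤ) * h3 + h1 - h2
    have hdvdZ : ((p ^ e : ℕ) : ℤ) ∣ ((c + S : ℕ) : ℤ) := by
      push_cast
      exact ⟨2 * u * c - d, key⟩
    have hdvdN : p ^ e ∣ c + S := Int.ofNat_dvd.mp hdvdZ
    have hle : p ^ e ≤ c + S := Nat.le_of_dvd (by omega) hdvdN
    have hSb := aux_S_bound p hp3 e
    omega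
  -- final contradiction
  have hF6 : 3 * t ^ 2 < 4 * n ^ 2 := by
    have hlt : 3 * n ^ 2 < 4 * s ^ 2 := by
      have hqs : q < 2 * s := by omega
      have h2 : q ^ 2 < (2 * s) ^ 2 := Nat.pow_lt_pow_left hqs (by norm_num)
      have h2' : q ^ 2 < 4 * s ^ 2 := by calc q ^ 2 < (2 * s) ^ 2 := h2
                                           _ = 4 * s ^ 2 := by ring
      omega
    have h9 : s ^ 2 * (3 * t ^ 2) < s ^ 2 * (4 * n ^ 2) := by
      calc s ^ 2 * (3 * t ^ 2) = 3 * (s * t) ^ 2 := by ring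
        _ = n ^ 2 * (3 * n ^ 2) := by rw [← ht]; ring
        _ < n ^ 2 * (4 * s ^ 2) := by
            have hn2pos : 0 < n ^ 2 := Nat.pow_pos (by omega)
            exact (mul_lt_mul_iff_right₀ hn2pos).mpr hlt
        _ = s ^ 2 * (4 * n ^ 2) := by ring
    exact Nat.lt_of_mul_lt_mul_left h9
  set P := p ^ e with hP_def
  set B := p ^ (2 * a - e) with hB_def
  have hB0 : 0 < B := Nat.pow_pos (by omega)
  have hP0 : 0 < P := Nat.pow_pos (by omega)
  have hcB : c * B ≤ t := by
    rw [htc]; exact Nat.mul_le_mul_left c hF4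
  have hstep : 3 * (c ^ 2 * B ^ 2) < 4 * (P * B * r ^ 2) := by
    calc 3 * (c ^ 2 * B ^ 2) = 3 * (c * B) ^ 2 := by ring
      _ ≤ 3 * t ^ 2 := by
          have := Nat.pow_le_pow_left hcB 2
          omega
      _ < 4 * n ^ 2 := hF6
      _ = 4 * (P * B * r ^ 2) := by rw [hn2eq, ← hPB]
  have hstep2 : 3 * (c ^ 2 * B) < 4 * (P * r ^ 2) := by
    have h10 : B * (3 * (c ^ 2 * B)) < B * (4 * (P * r ^ 2)) := by
      calc B * (3 * (c ^ 2 * B)) = 3 * (c ^ 2 * B ^ 2) := by ring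
        _ < 4 * (P * B * r ^ 2) := hstep
        _ = B * (4 * (P * r ^ 2)) := by ring
    exact Nat.lt_of_mul_lt_mul_left h10
  have hF1' : 4 * (c ^ 2 * r ^ 2) < 3 * (P * B) := by rw [hPB]; exact hF1
  have hprod : (3 * (c ^ 2 * B)) * (4 * (c ^ 2 * r ^ 2)) < (4 * (P * r ^ 2)) * (3 * (P * B)) :=
    Nat.mul_lt_mul'' hstep2 hF1'
  have hc4 : c ^ 4 < P ^ 2 := by
    have h11 : (12 * (B * r ^ 2)) * c ^ 4 < (12 * (B * r ^ 2)) * P ^ 2 := by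
      calc (12 * (B * r ^ 2)) * c ^ 4 = (3 * (c ^ 2 * B)) * (4 * (c ^ 2 * r ^ 2)) := by ring
        _ < (4 * (P * r ^ 2)) * (3 * (P * B)) := hprod
        _ = (12 * (B * r ^ 2)) * P ^ 2 := by ring
    exact Nat.lt_of_mul_lt_mul_left h11
  have hc2P : c ^ 2 < P := by
    by_contra h
    push_neg at h
    have := Nat.pow_le_pow_left h 2
    have h12 : (c ^ 2) ^ 2 = c ^ 4 := by ring
    omega
  have := aux_sq_ineq c
  omega

theorem stmt_9 (N q k n : ℕ) (hodd : Odd N) (hperf : ArithmeticFunction.sigma 1 N = 2 * N)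
    (hq : q.Prime) (hq4 : q % 4 = 1) (hk4 : k % 4 = 1)
    (hgcd : Nat.gcd q n = 1) (hN : N = q ^ k * n ^ 2) :
    (q : ℝ) < n * Real.sqrt 3 := by
  have hq2 := hq.two_le
  have hqodd : q % 2 = 1 := by omega
  have hk1 : 1 ≤ k := by omega
  have hN0 : N ≠ 0 := by
    rcases hodd with ⟨m, hm⟩; omega
  have hn0 : n ≠ 0 := by
    intro h; rw [h] at hN; simp at hN; omega
  have hnodd : n % 2 = 1 := by
    rcases Nat.even_or_odd n with he | ho
    · exfalso
      obtain ⟨m, hm⟩ := he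
      have : 2 ∣ N := by
        rw [hN, hm]
        exact Dvd.dvd.mul_left ⟨m * (m + m), by ring⟩ _
      rw [Nat.odd_iff] at hodd
      omega
    · exact Nat.odd_iff.mp ho
  have hco : Nat.Coprime (q ^ k) (n ^ 2) := Nat.Coprime.pow _ _ hgcd
  have hmul : σ 1 (q ^ k) * σ 1 (n ^ 2) = 2 * (q ^ k * n ^ 2) := by
    rw [← isMultiplicative_sigma.map_mul_of_coprime hco, ← hN, hperf, hN]
  have hσqk : σ 1 (q ^ k) = ∑ i ∈ range (k + 1), q ^ i := sigma_one_apply_prime_pow hq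
  have hqndvd : ¬ q ∣ σ 1 (q ^ k) := by
    rw [hσqk]; exact aux_not_dvd_sum q hq2 k
  -- rule out n = 1
  have hn1 : n ≠ 1 := by
    intro h
    have hσ1 : σ 1 (1 ^ 2 : ℕ) = 1 := by simp [sigma_one_apply]
    rw [h, hσ1, mul_one] at hmul
    apply hqndvd
    rw [hmul]
    have : q ∣ q ^ k * 1 ^ 2 := by
      simpa using dvd_pow_self q (by omega : k ≠ 0)
    exact Dvd.dvd.mul_left this 2
  have hn2le : 2 ≤ n := by omega
  -- by contradiction
  by_contra hcon
  push_neg at hcon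
  have h3nn : (3 : ℝ) * (n : ℝ) ^ 2 ≤ (q : ℝ) ^ 2 := by
    have hs3 : Real.sqrt 3 ^ 2 = 3 := Real.sq_sqrt (by norm_num)
    have hnn : (0 : ℝ) ≤ (n : ℝ) * Real.sqrt 3 := by positivity
    nlinarith [hcon]
  have hq2n : 3 * n ^ 2 ≤ q ^ 2 := by exact_mod_cast h3nn
  rcases eq_or_ne k 1 with hk | hk
  · -- k = 1
    subst hk
    have hmul1 : (q + 1) * (σ 1 (n ^ 2)) = 2 * (q * n ^ 2) := by
      have hσq1 : σ 1 (q ^ 1) = q + 1 := by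
        rw [hσqk, Finset.sum_range_succ, Finset.sum_range_one, pow_zero, pow_one]
        omega
      rw [hσq1, pow_one] at hmul
      exact hmul
    exact aux_k1 q n hq hqodd hn2le hnodd hmul1 hq2n
  · -- k ≥ 5
    have hk5 : 5 ≤ k := by omega
    have hcoq : Nat.Coprime (σ 1 (q ^ k)) (q ^ k) :=
      (Nat.Coprime.pow_left k ((hq.coprime_iff_not_dvd).mpr hqndvd)).symm
    have hdvd : σ 1 (q ^ k) ∣ 2 * n ^ 2 := by
      have h1 : σ 1 (q ^ k) ∣ (2 * n ^ 2) * q ^ k := ⟨σ 1 (n ^ 2), by rw [hmul]; ring⟩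
      exact hcoq.dvd_of_dvd_mul_right h1
    have hle : σ 1 (q ^ k) ≤ 2 * n ^ 2 := Nat.le_of_dvd (by positivity) hdvd
    have hqk_lt : q ^ k < σ 1 (q ^ k) := by
      rw [hσqk, Finset.sum_range_succ]
      have h2 : 1 ≤ ∑ i ∈ range k, q ^ i := by
        have : (1 : ℕ) = q ^ 0 := rfl
        calc (1 : ℕ) = q ^ 0 := rfl
          _ ≤ ∑ i ∈ range k, q ^ i :=
            Finset.single_le_sum (f := fun i => q ^ i) (fun i _ => Nat.zero_le _)
              (Finset.mem_range.mpr (by omega))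
      omega
    have h5k : q ^ 5 ≤ q ^ k := Nat.pow_le_pow_right (by omega) hk5
    have h45 : q ^ 4 ≤ q ^ 5 := Nat.pow_le_pow_right (by omega) (by omega)
    have h94 : 9 * n ^ 4 ≤ q ^ 4 := by
      have := Nat.pow_le_pow_left hq2n 2
      calc 9 * n ^ 4 = (3 * n ^ 2) ^ 2 := by ring
        _ ≤ (q ^ 2) ^ 2 := Nat.pow_le_pow_left hq2n 2
        _ = q ^ 4 := by ring
    have hn24 : 9 * n ^ 2 ≤ 9 * n ^ 4 := by
      have : n ^ 2 ≤ n ^ 4 := Nat.pow_le_pow_right (by omega) (by omega)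
      omega
    omega
end

section
/- If N = q^k · n² is an odd perfect number given in Eulerian form, then I(q^k) < 2^{1/3} < I(n), where I(m) = σ(m)/m. -/
lemma aux_div_gcd_dvd {d n : ℕ} (hn : n ≠ 0) (hd : d ∣ n ^ 2) : d / Nat.gcd d n ∣ n := by
  have hd0 : d ≠ 0 := by
    rintro rfl
    exact hn (by simpa [pow_eq_zero_iff] using (Nat.eq_zero_of_zero_dvd hd))
  have hg : Nat.gcd d n ∣ d := Nat.gcd_dvd_left d n
  have hdg0 : d / Nat.gcd d n ≠ 0 := by
    have : 0 < Nat.gcd d n := Nat.gcd_pos_of_pos_left n (Nat.pos_of_ne_zero hd0)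
    exact (Nat.div_pos (Nat.le_of_dvd (Nat.pos_of_ne_zero hd0) hg) this).ne'
  rw [← Nat.factorization_le_iff_dvd hdg0 hn, Finsupp.le_def]
  intro p
  have h2 : d.factorization p ≤ (n ^ 2).factorization p :=
    (Finsupp.le_def.mp ((Nat.factorization_le_iff_dvd hd0 (pow_ne_zero 2 hn)).mpr hd)) p
  rw [Nat.factorization_pow] at h2
  rw [Nat.factorization_div hg]
  simp only [Nat.factorization_gcd hd0 hn, Finsupp.tsub_apply, Finsupp.inf_apply,
    Finsupp.smul_apply, smul_eq_mul] at *
  omega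

lemma aux_sigma_sq_le (n : ℕ) (hn : n ≠ 0) :
    ArithmeticFunction.sigma 1 (n ^ 2) ≤ ArithmeticFunction.sigma 1 n * ArithmeticFunction.sigma 1 n := by
  rw [ArithmeticFunction.sigma_one_apply, ArithmeticFunction.sigma_one_apply,
    Finset.sum_mul_sum, ← Finset.sum_product']
  have hkey : ∀ d ∈ (n ^ 2).divisors, d = Nat.gcd d n * (d / Nat.gcd d n) := by
    intro d hd
    exact (Nat.mul_div_cancel' (Nat.gcd_dvd_left d n)).symm
  calc ∑ d ∈ (n ^ 2).divisors, d
      = ∑ d ∈ (n ^ 2).divisors, Nat.gcd d n * (d / Nat.gcd d n) :=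
        Finset.sum_congr rfl hkey
    _ = ∑ p ∈ (n ^ 2).divisors.image (fun d => (Nat.gcd d n, d / Nat.gcd d n)), p.1 * p.2 := by
        rw [Finset.sum_image]
        intro x hx y hy hxy
        have h1 : Nat.gcd x n = Nat.gcd y n := congrArg Prod.fst hxy
        have h2 : x / Nat.gcd x n = y / Nat.gcd y n := congrArg Prod.snd hxy
        have h3 := hkey x hx
        rw [h2, h1] at h3
        rw [h3, ← hkey y hy]
    _ ≤ ∑ p ∈ n.divisors ×ˢ n.divisors, p.1 * p.2 := by
        apply Finset.sum_le_sum_of_subset_of_nonneg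
        · intro p hp
          simp only [Finset.mem_image] at hp
          obtain ⟨d, hd, rfl⟩ := hp
          rw [Nat.mem_divisors] at hd
          rw [Finset.mem_product]
          exact ⟨Nat.mem_divisors.mpr ⟨Nat.gcd_dvd_right d n, hn⟩,
            Nat.mem_divisors.mpr ⟨aux_div_gcd_dvd hn hd.1, hn⟩⟩
        · intros; exact Nat.zero_le _

lemma aux_geom (q m : ℕ) : (q - 1) * ∑ i ∈ Finset.range m, q ^ i = q ^ m - 1 := by
  induction m with
  | zero => simp
  | succ m ih =>
    rcases Nat.eq_zero_or_pos q with rfl | hq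
    · simp
    have h1 : 1 ≤ q ^ m := Nat.one_le_pow _ _ hq
    have h2 : q ^ m ≤ q * q ^ m := Nat.le_mul_of_pos_left _ hq
    rw [Finset.sum_range_succ, Nat.mul_add, ih, Nat.sub_mul, pow_succ, one_mul,
      mul_comm (q ^ m) q]
    omega

theorem stmt_10 (N q k n : ℕ) (hodd : Odd N) (hperf : ArithmeticFunction.sigma 1 N = 2 * N)
    (hq : q.Prime) (hq4 : q % 4 = 1) (hk4 : k % 4 = 1)
    (hgcd : Nat.gcd q n = 1) (hN : N = q ^ k * n ^ 2) :
    (ArithmeticFunction.sigma 1 (q ^ k) : ℝ) / (q ^ k : ℕ) < 2 ^ ((1 : ℝ) / 3) ∧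
    (2 : ℝ) ^ ((1 : ℝ) / 3) < (ArithmeticFunction.sigma 1 n : ℝ) / n := by
  have hq5 : 5 ≤ q := by
    have h2 := hq.two_le
    rcases Nat.lt_or_ge q 5 with h | h
    · interval_cases q <;> omega
    · exact h
  have hN0 : N ≠ 0 := by rintro rfl; simpa using hodd
  have hn0 : n ≠ 0 := by rintro rfl; simp at hN; exact hN0 (by simp [hN])
  have hqk0 : q ^ k ≠ 0 := pow_ne_zero _ (by omega)
  -- key inequality: 4 * σ(q^k) < 5 * q^k
  have hsig : 4 * ArithmeticFunction.sigma 1 (q ^ k) < 5 * q ^ k := by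
    have hgeo := aux_geom q (k + 1)
    have hσ : ArithmeticFunction.sigma 1 (q ^ k) = ∑ i ∈ Finset.range (k + 1), q ^ i :=
      ArithmeticFunction.sigma_one_apply_prime_pow hq
    have hstep : (q - 1) * ArithmeticFunction.sigma 1 (q ^ k) < q * q ^ k := by
      rw [hσ, hgeo, pow_succ, mul_comm (q ^ k) q]
      have : 1 ≤ q * q ^ k := Nat.one_le_iff_ne_zero.mpr (by positivity)
      omega
    -- 4(q-1)σ < 4 q q^k ≤ 5(q-1) q^k
    have h45 : 4 * q ≤ 5 * (q - 1) := by omega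
    have h1 : 4 * ((q - 1) * ArithmeticFunction.sigma 1 (q ^ k)) < 4 * (q * q ^ k) := by
      omega
    have h2 : 4 * (q * q ^ k) ≤ 5 * ((q - 1) * q ^ k) := by
      calc 4 * (q * q ^ k) = (4 * q) * q ^ k := by ring
        _ ≤ (5 * (q - 1)) * q ^ k := Nat.mul_le_mul_right _ h45
        _ = 5 * ((q - 1) * q ^ k) := by ring
    have h3 : (q - 1) * (4 * ArithmeticFunction.sigma 1 (q ^ k)) < (q - 1) * (5 * q ^ k) := by
      calc (q - 1) * (4 * ArithmeticFunction.sigma 1 (q ^ k))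
          = 4 * ((q - 1) * ArithmeticFunction.sigma 1 (q ^ k)) := by ring
        _ < 4 * (q * q ^ k) := h1
        _ ≤ 5 * ((q - 1) * q ^ k) := h2
        _ = (q - 1) * (5 * q ^ k) := by ring
    exact Nat.lt_of_mul_lt_mul_left h3
  -- cube root facts
  set c : ℝ := (2 : ℝ) ^ ((1 : ℝ) / 3) with hc
  have hc0 : (0 : ℝ) < c := Real.rpow_pos_of_pos (by norm_num) _
  have hc3 : c ^ 3 = 2 := by
    rw [hc, ← Real.rpow_natCast ((2:ℝ) ^ ((1:ℝ)/3)) 3, ← Real.rpow_mul (by norm_num)]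
    norm_num
  have hqkR : (0 : ℝ) < ((q ^ k : ℕ) : ℝ) := by positivity
  constructor
  · -- σ(q^k)/q^k < 5/4 < c
    have h54 : (5 / 4 : ℝ) < c := by
      nlinarith [hc3, hc0, sq_nonneg (c - 5/4), sq_nonneg (c + 5/4), sq_nonneg c]
    have hd : (ArithmeticFunction.sigma 1 (q ^ k) : ℝ) / ((q ^ k : ℕ) : ℝ) < 5 / 4 := by
      rw [div_lt_div_iff₀ hqkR (by norm_num)]
      have := hsig
      push_cast
      exact_mod_cast by
        have : (4 * ArithmeticFunction.sigma 1 (q ^ k) : ℝ) < 5 * (q ^ k : ℕ) := by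
          exact_mod_cast hsig
        linarith
    linarith
  · -- second part
    have hcop : Nat.Coprime (q ^ k) (n ^ 2) := Nat.Coprime.pow k 2 hgcd
    have hmul : ArithmeticFunction.sigma 1 (q ^ k) * ArithmeticFunction.sigma 1 (n ^ 2)
        = 2 * (q ^ k * n ^ 2) := by
      rw [← ArithmeticFunction.isMultiplicative_sigma.map_mul_of_coprime hcop, ← hN, hperf, hN]
    have hσn2pos : 0 < ArithmeticFunction.sigma 1 (n ^ 2) := by
      rcases Nat.eq_zero_or_pos (ArithmeticFunction.sigma 1 (n ^ 2)) with h | h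
      · rw [h, mul_zero] at hmul
        exact absurd hmul.symm (by positivity)
      · exact h
    have hkey : 8 * n ^ 2 < 5 * (ArithmeticFunction.sigma 1 n) ^ 2 := by
      have h1 : 4 * ArithmeticFunction.sigma 1 (q ^ k) * ArithmeticFunction.sigma 1 (n ^ 2)
          < 5 * q ^ k * ArithmeticFunction.sigma 1 (n ^ 2) :=
        Nat.mul_lt_mul_of_lt_of_le hsig (le_refl _) hσn2pos
      rw [mul_assoc, hmul] at h1
      have h2 : 5 * q ^ k * ArithmeticFunction.sigma 1 (n ^ 2)
          ≤ 5 * q ^ k * (ArithmeticFunction.sigma 1 n * ArithmeticFunction.sigma 1 n) :=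
        Nat.mul_le_mul_left _ (aux_sigma_sq_le n hn0)
      have h3 : 4 * (2 * (q ^ k * n ^ 2)) = q ^ k * (8 * n ^ 2) := by ring
      have h4 : 5 * q ^ k * (ArithmeticFunction.sigma 1 n * ArithmeticFunction.sigma 1 n)
          = q ^ k * (5 * (ArithmeticFunction.sigma 1 n) ^ 2) := by ring
      have h5 : q ^ k * (8 * n ^ 2) < q ^ k * (5 * (ArithmeticFunction.sigma 1 n) ^ 2) := by
        calc q ^ k * (8 * n ^ 2) = 4 * (2 * (q ^ k * n ^ 2)) := h3.symm
          _ < 5 * q ^ k * ArithmeticFunction.sigma 1 (n ^ 2) := h1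
          _ ≤ _ := h2
          _ = _ := h4
      exact Nat.lt_of_mul_lt_mul_left h5
    -- pass to reals
    have hnR : (0 : ℝ) < (n : ℝ) := by exact_mod_cast Nat.pos_of_ne_zero hn0
    set x : ℝ := (ArithmeticFunction.sigma 1 n : ℝ) / (n : ℝ) with hx
    have hx0 : 0 ≤ x := by positivity
    have hx2 : (8 : ℝ) / 5 < x ^ 2 := by
      rw [hx, div_pow, div_lt_div_iff₀ (by norm_num) (by positivity)]
      have hcast : (8 : ℝ) * (n : ℝ) ^ 2 < 5 * (ArithmeticFunction.sigma 1 n : ℝ) ^ 2 := by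
        exact_mod_cast hkey
      linarith
    by_contra hcon
    push_neg at hcon
    have h6 : x ^ 6 ≤ c ^ 6 := pow_le_pow_left₀ hx0 hcon 6
    have hc6 : c ^ 6 = 4 := by
      have : c ^ 6 = (c ^ 3) ^ 2 := by ring
      rw [this, hc3]; norm_num
    have h7 : ((8 : ℝ) / 5) ^ 3 < (x ^ 2) ^ 3 := by
      apply pow_lt_pow_left₀ hx2 (by norm_num)
      norm_num
    have h8 : (x ^ 2) ^ 3 = x ^ 6 := by ring
    rw [h8] at h7
    rw [hc6] at h6
    norm_num at h7
    linarith
end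

section
/- If N = q^k · n² is an odd perfect number in Eulerian form and σ(q^k) = σ(n), then n < q^k. -/
open Finset ArithmeticFunction

lemma sigma_sq_le (n : ℕ) (hn : n ≠ 0) :
    ArithmeticFunction.sigma 1 (n ^ 2) ≤ (ArithmeticFunction.sigma 1 n) ^ 2 := by
  rw [sigma_one_apply, sigma_one_apply,
    show (∑ d ∈ n.divisors, d) ^ 2 = (∑ d ∈ n.divisors, d) * (∑ d ∈ n.divisors, d) from sq _,
    Finset.sum_mul_sum]
  set D := n.divisors
  set f : ℕ → ℕ × ℕ := fun d => (Nat.gcd d n, d / Nat.gcd d n) with hf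
  have hmul : ∀ d, Nat.gcd d n * (d / Nat.gcd d n) = d := fun d =>
    Nat.mul_div_cancel' (Nat.gcd_dvd_left d n)
  have hinj : Set.InjOn f (n ^ 2).divisors := by
    intro a _ b _ hab
    have : (f a).1 * (f a).2 = (f b).1 * (f b).2 := by rw [hab]
    simpa [hf, hmul] using this
  have hmaps : ∀ d ∈ (n ^ 2).divisors, f d ∈ D ×ˢ D := by
    intro d hd
    obtain ⟨hdvd, -⟩ := Nat.mem_divisors.mp hd
    have hgpos : 0 < Nat.gcd d n := Nat.gcd_pos_of_pos_right d (Nat.pos_of_ne_zero hn)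
    set g := Nat.gcd d n with hg
    have h1 : g ∣ n := Nat.gcd_dvd_right d n
    have h2 : d / g ∣ n := by
      have hcop : (d / g).Coprime (n / g) := Nat.coprime_div_gcd_div_gcd hgpos
      have hdn : d / g ∣ (n / g) * n := by
        have : g * (d / g) ∣ g * ((n / g) * n) := by
          rw [hmul d, ← mul_assoc, Nat.mul_div_cancel' h1, ← sq]
          exact hdvd
        exact (mul_dvd_mul_iff_left hgpos.ne' |>.mp this)
      exact hcop.dvd_of_dvd_mul_left hdn
    exact Finset.mem_product.mpr ⟨Nat.mem_divisors.mpr ⟨Nat.gcd_dvd_right d n, hn⟩,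
      Nat.mem_divisors.mpr ⟨h2, hn⟩⟩
  calc ∑ d ∈ (n ^ 2).divisors, d
      = ∑ d ∈ (n ^ 2).divisors, (f d).1 * (f d).2 := by
        refine Finset.sum_congr rfl fun d _ => ?_
        simp [hf, hmul]
    _ = ∑ p ∈ (n ^ 2).divisors.image f, p.1 * p.2 := by
        rw [Finset.sum_image (fun a ha b hb h => hinj ha hb h)]
    _ ≤ ∑ p ∈ D ×ˢ D, p.1 * p.2 := by
        refine Finset.sum_le_sum_of_subset ?_
        intro p hp
        obtain ⟨d, hd, rfl⟩ := Finset.mem_image.mp hp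
        exact hmaps d hd
    _ = ∑ i ∈ D, ∑ j ∈ D, i * j := by rw [Finset.sum_product]

lemma geom_bound (q : ℕ) (hq : 5 ≤ q) : ∀ k, 4 * ∑ i ∈ Finset.range (k + 1), q ^ i ≤ 5 * q ^ k := by
  intro k
  induction k with
  | zero => simp
  | succ k ih =>
    rw [Finset.sum_range_succ, Nat.mul_add]
    have h5 : 5 * q ^ k ≤ q ^ (k + 1) := by
      rw [pow_succ, mul_comm (q ^ k) q]
      exact Nat.mul_le_mul_right _ hq
    calc 4 * ∑ i ∈ Finset.range (k + 1), q ^ i + 4 * q ^ (k + 1)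
        ≤ 5 * q ^ k + 4 * q ^ (k + 1) := by omega
      _ ≤ q ^ (k + 1) + 4 * q ^ (k + 1) := by omega
      _ = 5 * q ^ (k + 1) := by ring

theorem stmt_13 (N q k n : ℕ) (hodd : Odd N) (hperf : ArithmeticFunction.sigma 1 N = 2 * N)
    (hq : q.Prime) (hq4 : q % 4 = 1) (hk4 : k % 4 = 1)
    (hgcd : Nat.gcd q n = 1) (hN : N = q ^ k * n ^ 2)
    (hsig : ArithmeticFunction.sigma 1 (q ^ k) = ArithmeticFunction.sigma 1 n) :
    n < q ^ k := by
  have hq5 : 5 ≤ q := by have := hq.two_le; omega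
  have hn0 : n ≠ 0 := by rintro rfl; rw [hN] at hodd; simp [Nat.odd_iff] at hodd
  have hgcd' : Nat.Coprime q n := hgcd
  have hcop : Nat.Coprime (q ^ k) (n ^ 2) := Nat.Coprime.pow k 2 hgcd'
  have hmul : ArithmeticFunction.sigma 1 N
      = ArithmeticFunction.sigma 1 (q ^ k) * ArithmeticFunction.sigma 1 (n ^ 2) := by
    rw [hN]
    exact (ArithmeticFunction.isMultiplicative_sigma.map_mul_of_coprime hcop)
  set A := ArithmeticFunction.sigma 1 (q ^ k) with hA
  have hC : ArithmeticFunction.sigma 1 (n ^ 2) ≤ A ^ 2 := by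
    rw [hsig]; exact sigma_sq_le n hn0
  have key : 2 * (q ^ k * n ^ 2) ≤ A ^ 3 := by
    have : A * ArithmeticFunction.sigma 1 (n ^ 2) = 2 * (q ^ k * n ^ 2) := by
      rw [← hmul, hperf, hN]
    calc 2 * (q ^ k * n ^ 2) = A * ArithmeticFunction.sigma 1 (n ^ 2) := this.symm
      _ ≤ A * A ^ 2 := Nat.mul_le_mul_left _ hC
      _ = A ^ 3 := by ring
  have hAle : 4 * A ≤ 5 * q ^ k := by
    have := geom_bound q hq5 k
    rw [hA, ArithmeticFunction.sigma_one_apply_prime_pow hq]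
    simpa using this
  have hcube : 64 * A ^ 3 ≤ 125 * (q ^ k) ^ 3 := by
    have h := Nat.pow_le_pow_left hAle 3
    calc 64 * A ^ 3 = (4 * A) ^ 3 := by ring
      _ ≤ (5 * q ^ k) ^ 3 := h
      _ = 125 * (q ^ k) ^ 3 := by ring
  have hqk0 : 0 < q ^ k := pow_pos (by omega) k
  have hfin : 128 * n ^ 2 ≤ 125 * (q ^ k) ^ 2 := by
    have h1 : 128 * (q ^ k * n ^ 2) ≤ 125 * (q ^ k) ^ 3 := by
      calc 128 * (q ^ k * n ^ 2) = 64 * (2 * (q ^ k * n ^ 2)) := by ring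
        _ ≤ 64 * A ^ 3 := Nat.mul_le_mul_left _ key
        _ ≤ 125 * (q ^ k) ^ 3 := hcube
    have h2 : q ^ k * (128 * n ^ 2) ≤ q ^ k * (125 * (q ^ k) ^ 2) := by
      calc q ^ k * (128 * n ^ 2) = 128 * (q ^ k * n ^ 2) := by ring
        _ ≤ 125 * (q ^ k) ^ 3 := h1
        _ = q ^ k * (125 * (q ^ k) ^ 2) := by ring
    exact Nat.le_of_mul_le_mul_left h2 hqk0
  have hsq : n ^ 2 < (q ^ k) ^ 2 := by
    nlinarith [sq_nonneg (q ^ k)]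
  exact lt_of_pow_lt_pow_left₀ 2 (Nat.zero_le _) hsq
end

section
/- If N = q^k · n² is an odd perfect number in Eulerian form with q ≡ 2 (mod 3), then 3 divides n. -/
theorem stmt_19 (N q k n : ℕ) (hodd : Odd N) (hperf : ArithmeticFunction.sigma 1 N = 2 * N)
    (hq : q.Prime) (hq4 : q % 4 = 1) (hk4 : k % 4 = 1)
    (hgcd : Nat.gcd q n = 1) (hN : N = q ^ k * n ^ 2)
    (hq3 : q % 3 = 2) :
    3 ∣ n := by
  have hcop : Nat.Coprime (q ^ k) (n ^ 2) := Nat.Coprime.pow k 2 hgcd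
  have hmul : ArithmeticFunction.sigma 1 N
      = ArithmeticFunction.sigma 1 (q ^ k) * ArithmeticFunction.sigma 1 (n ^ 2) := by
    rw [hN, ArithmeticFunction.isMultiplicative_sigma.map_mul_of_coprime hcop]
  -- 3 ∣ σ(q^k)
  have h3 : 3 ∣ ArithmeticFunction.sigma 1 (q ^ k) := by
    rw [ArithmeticFunction.sigma_one_apply_prime_pow hq]
    have : (((∑ j ∈ Finset.range (k + 1), q ^ j : ℕ)) : ZMod 3) = 0 := by
      push_cast
      have hqc : (q : ZMod 3) = -1 := by
        rw [show (q : ZMod 3) = ((q % 3 : ℕ) : ZMod 3) from (ZMod.natCast_mod q 3).symm, hq3]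
        decide
      rw [hqc, geom_sum_eq (by decide : (-1 : ZMod 3) ≠ 1)]
      have hk : Even (k + 1) := by
        have hk' : Odd k := by rw [Nat.odd_iff]; omega
        exact hk'.add_one
      rw [hk.neg_one_pow]
      simp
    exact (ZMod.natCast_eq_zero_iff _ 3).mp this
  have hdvd : (3 : ℕ) ∣ 2 * N := by
    rw [← hperf, hmul]
    exact Dvd.dvd.mul_right h3 _
  have h3N : (3 : ℕ) ∣ N := by
    rcases (Nat.Coprime.dvd_of_dvd_mul_left (by decide) hdvd) with h
    exact h
  rw [hN] at h3N
  have h3q : ¬ (3 : ℕ) ∣ q ^ k := by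
    intro h
    have := Nat.Prime.dvd_of_dvd_pow (p := 3) (by norm_num) h
    omega
  have := (Nat.Prime.dvd_mul (by norm_num)).mp h3N
  rcases this with h | h
  · exact absurd h h3q
  · exact Nat.Prime.dvd_of_dvd_pow (by norm_num) h
end
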